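/- arXiv:2309.09499 — 3 statements merged into one kernel-verified Lean document; each statement's English description precedes it below -/
import Mathlib

section
/- Let H be a complex Hilbert space and A : dom(A) ⊆ H → H a skew-selfadjoint operator with H₀ := ker A and closed range H₁ := ran A = (ker A)ᗮ, and let Ã : dom(A) ∩ H₁ ⊆ H₁ → H₁ denote the restriction of A. Let T ∈ L(H) with block components T_ij, and assume T₀₀ is boundedly invertible and Re(T₁₁ − T₁₀T₀₀⁻¹T₀₁) ≥ c for some c > 0. Then T_A := T₁₁ − T₁₀T₀₀⁻¹T₀₁ + Ã (domain dom(A) ∩ H₁) is boundedly invertible on H₁ with ‖T_A⁻¹‖ ≤ 1/c and ‖Ã T_A⁻¹‖ ≤ 1 + ‖T₁₁ − T₁₀T₀₀⁻¹T₀₁‖/c, the operator T + A (with domain dom(A)) is boundedly invertible on H, and (T+A)⁻¹ is given blockwise by [[T₀₀⁻¹ + T₀₀⁻¹T₀₁T_A⁻¹T₁₀T₀₀⁻¹, −T₀₀⁻¹T₀₁T_A⁻¹], [−T_A⁻¹T₁₀T₀₀⁻¹, T_A⁻¹]]. -/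
noncomputable section
open Filter Topology ContinuousLinearMap

namespace Paper

/-- `Re S ≥ c` for a bounded operator on a complex Hilbert space:
`Re⟨Sφ,φ⟩ ≥ c‖φ‖²` for all `φ`. -/
def ReGE {K : Type*} [NormedAddCommGroup K] [InnerProductSpace ℂ K]
    (S : K →L[ℂ] K) (c : ℝ) : Prop :=
  ∀ φ : K, c * ‖φ‖ ^ 2 ≤ (inner ℂ (S φ) φ : ℂ).re

variable {H : Type*} [NormedAddCommGroup H] [InnerProductSpace ℂ H] [CompleteSpace H]

/-- Block components of `M ∈ L(H)` w.r.t. the orthogonal decomposition `H = H₀ ⊕ H₀ᗮ`: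
`M_ij = P_i ∘ M ∘ ι_j`. -/
def blk00 (H₀ : Submodule ℂ H) [CompleteSpace H₀] (M : H →L[ℂ] H) : H₀ →L[ℂ] H₀ :=
  (Submodule.orthogonalProjectionOnto H₀) ∘L M ∘L H₀.subtypeL

def blk01 (H₀ : Submodule ℂ H) [CompleteSpace H₀] (M : H →L[ℂ] H) : H₀ᗮ →L[ℂ] H₀ :=
  (Submodule.orthogonalProjectionOnto H₀) ∘L M ∘L H₀ᗮ.subtypeL

def blk10 (H₀ : Submodule ℂ H) [CompleteSpace H₀] (M : H →L[ℂ] H) : H₀ →L[ℂ] H₀ᗮ :=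
  (Submodule.orthogonalProjectionOnto H₀ᗮ) ∘L M ∘L H₀.subtypeL

def blk11 (H₀ : Submodule ℂ H) [CompleteSpace H₀] (M : H →L[ℂ] H) : H₀ᗮ →L[ℂ] H₀ᗮ :=
  (Submodule.orthogonalProjectionOnto H₀ᗮ) ∘L M ∘L H₀ᗮ.subtypeL

/-- `M₀₀⁻¹` (via `Ring.inverse`, which is the genuine inverse when `M₀₀` is invertible). -/
def schur00 (H₀ : Submodule ℂ H) [CompleteSpace H₀] (M : H →L[ℂ] H) : H₀ →L[ℂ] H₀ :=
  Ring.inverse (blk00 H₀ M)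

/-- `M₁₀M₀₀⁻¹`. -/
def schur10 (H₀ : Submodule ℂ H) [CompleteSpace H₀] (M : H →L[ℂ] H) : H₀ →L[ℂ] H₀ᗮ :=
  blk10 H₀ M ∘L schur00 H₀ M

/-- `M₀₀⁻¹M₀₁`. -/
def schur01 (H₀ : Submodule ℂ H) [CompleteSpace H₀] (M : H →L[ℂ] H) : H₀ᗮ →L[ℂ] H₀ :=
  schur00 H₀ M ∘L blk01 H₀ M

/-- `M₁₁ − M₁₀M₀₀⁻¹M₀₁`. -/
def schur11 (H₀ : Submodule ℂ H) [CompleteSpace H₀] (M : H →L[ℂ] H) : H₀ᗮ →L[ℂ] H₀ᗮ :=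
  blk11 H₀ M - blk10 H₀ M ∘L schur00 H₀ M ∘L blk01 H₀ M

/-- `M ∈ ℳ(H₀,H₁)`: both `M₀₀` and `M` are boundedly invertible. -/
def MemM (H₀ : Submodule ℂ H) [CompleteSpace H₀] (M : H →L[ℂ] H) : Prop :=
  IsUnit (blk00 H₀ M) ∧ IsUnit M

/-- `M ∈ ℳ(α)`. -/
def MemMa (H₀ : Submodule ℂ H) [CompleteSpace H₀] (a00 a01 a10 a11 : ℝ)
    (M : H →L[ℂ] H) : Prop :=
  MemM H₀ M ∧ ReGE (blk00 H₀ M) a00 ∧ ReGE (schur00 H₀ M) (1 / a11) ∧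
    ‖schur10 H₀ M‖ ≤ a10 ∧ ‖schur01 H₀ M‖ ≤ a01 ∧
    ReGE (schur11 H₀ M) a00 ∧ ReGE (Ring.inverse (schur11 H₀ M)) (1 / a11)

/-- `B ∈ L(H)` is a (two-sided) bounded inverse of the (possibly unbounded) linear
operator `S`. -/
def IsBoundedInverse {H : Type*} [NormedAddCommGroup H] [InnerProductSpace ℂ H]
    (S : H →ₗ.[ℂ] H) (B : H →L[ℂ] H) : Prop :=
  (∀ u : S.domain, B (S u) = (u : H)) ∧
    ∀ y : H, ∃ hy : B y ∈ S.domain, S ⟨B y, hy⟩ = y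

/-- The operator `T + A` with domain `dom(A)`, for `T` bounded and `A` a linear
operator with domain `A.domain`. -/
def addA {H : Type*} [NormedAddCommGroup H] [InnerProductSpace ℂ H]
    (T : H →L[ℂ] H) (A : H →ₗ.[ℂ] H) : H →ₗ.[ℂ] H :=
  (T : H →ₗ[ℂ] H).toPMap A.domain + A

set_option maxHeartbeats 1000000 in
/-- Let `A` be skew-selfadjoint with `H₀ = ker A` and
`H₀ᗮ = ran A`, and `T ∈ L(H)` with `T₀₀` boundedly invertible and
`Re (T₁₁ − T₁₀T₀₀⁻¹T₀₁) ≥ c > 0`. Then `T_A = T₁₁ − T₁₀T₀₀⁻¹T₀₁ + Ã` (with domain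
`dom(A) ∩ H₁`) is boundedly invertible with `‖T_A⁻¹‖ ≤ 1/c` and
`‖Ã T_A⁻¹‖ ≤ 1 + ‖T₁₁ − T₁₀T₀₀⁻¹T₀₁‖/c`, and `T + A` (with domain `dom(A)`) is
boundedly invertible with the stated blockwise inverse. -/
theorem statement_12
    (A : H →ₗ.[ℂ] H) (hdense : Dense (A.domain : Set H)) (hskew : A.adjoint = -A)
    (H₀ : Submodule ℂ H) [CompleteSpace H₀]
    (hker : H₀ = (LinearMap.ker A.toFun).map A.domain.subtype)
    (hran : H₀ᗮ = LinearMap.range A.toFun)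
    (T : H →L[ℂ] H) (c : ℝ) (hc : 0 < c)
    (hT00 : IsUnit (blk00 H₀ T)) (hs11 : ReGE (schur11 H₀ T) c) :
    ∃ B : ↥H₀ᗮ →L[ℂ] ↥H₀ᗮ,
      ‖B‖ ≤ 1 / c ∧
      -- left inverse of `T_A` on `dom(A) ∩ H₁`
      (∀ (u : ↥H₀ᗮ) (hu : (u : H) ∈ A.domain),
        B (schur11 H₀ T u + Submodule.orthogonalProjectionOnto H₀ᗮ (A ⟨(u : H), hu⟩)) = u) ∧
      -- right inverse of `T_A`, together with the bound on `‖Ã T_A⁻¹‖`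
      (∃ hmem : ∀ y : ↥H₀ᗮ, ((B y : ↥H₀ᗮ) : H) ∈ A.domain,
        (∀ y : ↥H₀ᗮ,
          schur11 H₀ T (B y) + Submodule.orthogonalProjectionOnto H₀ᗮ (A ⟨((B y : ↥H₀ᗮ) : H), hmem y⟩)
            = y) ∧
        (∀ y : ↥H₀ᗮ,
          ‖A ⟨((B y : ↥H₀ᗮ) : H), hmem y⟩‖ ≤ (1 + ‖schur11 H₀ T‖ / c) * ‖y‖)) ∧
      -- `T + A` is boundedly invertible with the blockwise inverse
      IsBoundedInverse (addA T A)
        (H₀.subtypeL ∘L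
            (schur00 H₀ T + schur01 H₀ T ∘L B ∘L schur10 H₀ T) ∘L
            (Submodule.orthogonalProjectionOnto H₀) +
          H₀.subtypeL ∘L (-(schur01 H₀ T ∘L B)) ∘L (Submodule.orthogonalProjectionOnto H₀ᗮ) +
          H₀ᗮ.subtypeL ∘L (-(B ∘L schur10 H₀ T)) ∘L (Submodule.orthogonalProjectionOnto H₀) +
          H₀ᗮ.subtypeL ∘L B ∘L (Submodule.orthogonalProjectionOnto H₀ᗮ)) := by
  classical
  -- abbreviations
  set S : ↥H₀ᗮ →L[ℂ] ↥H₀ᗮ := schur11 H₀ T with hSdef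
  -- ker A ⊆ H₀ facts
  have hH0dom : ∀ x : H, x ∈ H₀ → ∃ hx : x ∈ A.domain, A ⟨x, hx⟩ = 0 := by
    intro x hx
    rw [hker, Submodule.mem_map] at hx
    obtain ⟨y, hy, rfl⟩ := hx
    refine ⟨(y : A.domain).2, ?_⟩
    rw [LinearMap.mem_ker] at hy
    exact (congrArg (fun z : A.domain => A z) (Subtype.ext rfl)).trans hy
  have hranA : ∀ x : A.domain, A x ∈ H₀ᗮ := by
    intro x
    rw [hran]
    exact ⟨x, rfl⟩
  -- formal adjoint and skewness
  have hadj : (-A).IsFormalAdjoint A := hskew ▸ LinearPMap.adjoint_isFormalAdjoint hdense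
  have hskw : ∀ x y : A.domain, (inner ℂ (A x) ((y : H)) : ℂ) = -(inner ℂ ((x : H)) (A y) : ℂ) := by
    intro x y
    have h := hadj x y
    rw [LinearPMap.neg_apply, inner_neg_left] at h
    exact neg_eq_iff_eq_neg.mp h
  have hre0 : ∀ x : A.domain, (inner ℂ (A x) ((x : H)) : ℂ).re = 0 := by
    intro x
    have h := hskw x x
    rw [← inner_conj_symm ((x : H)) (A x)] at h
    have h2 := congrArg Complex.re h
    simp only [Complex.neg_re, Complex.conj_re] at h2
    linarith
  -- A is closed
  have hclosed : ∀ (u : ℕ → A.domain) (x f : H),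
      Tendsto (fun n => ((u n : H))) atTop (𝓝 x) →
      Tendsto (fun n => A (u n)) atTop (𝓝 f) →
      ∃ hx : x ∈ A.domain, A ⟨x, hx⟩ = f := by
    intro u x f hux huf
    have key : ∀ v : A.domain, (inner ℂ (-f) ((v : H)) : ℂ) = inner ℂ x (A v) := by
      intro v
      have h1 : Tendsto (fun n => (inner ℂ (A (u n)) ((v : H)) : ℂ)) atTop
          (𝓝 (inner ℂ f ((v : H)))) := huf.inner tendsto_const_nhds
      have h2 : (fun n => (inner ℂ (A (u n)) ((v : H)) : ℂ))
          = fun n => -(inner ℂ ((u n : H)) (A v) : ℂ) := funext fun n => hskw _ _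
      have h3 : Tendsto (fun n => -(inner ℂ ((u n : H)) (A v) : ℂ)) atTop
          (𝓝 (-(inner ℂ x (A v) : ℂ))) := (hux.inner tendsto_const_nhds).neg
      have h4 : (inner ℂ f ((v : H)) : ℂ) = -(inner ℂ x (A v) : ℂ) :=
        tendsto_nhds_unique (h2 ▸ h1) h3
      rw [inner_neg_left, h4, neg_neg]
    have hxdom : x ∈ A.adjoint.domain :=
      LinearPMap.mem_adjoint_domain_of_exists _ ⟨-f, fun v => key v⟩
    have hval : A.adjoint ⟨x, hxdom⟩ = -f :=
      LinearPMap.adjoint_apply_eq hdense _ (fun v => key v)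
    have hle := le_of_eq hskew
    have hxdom' : x ∈ A.domain := hle.1 hxdom
    refine ⟨hxdom', ?_⟩
    have h5 : A.adjoint (⟨x, hxdom⟩ : A.adjoint.domain) = (-A) ⟨x, hxdom'⟩ := hle.2 rfl
    rw [hval, LinearPMap.neg_apply] at h5
    exact (neg_inj.mp h5).symm
  -- coercivity estimate
  have hcoe : ∀ (u : ↥H₀ᗮ) (hu : (u : H) ∈ A.domain),
      ((Submodule.orthogonalProjectionOnto H₀ᗮ (A ⟨(u : H), hu⟩) : ↥H₀ᗮ) : H) = A ⟨(u : H), hu⟩ :=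
    fun u hu => Submodule.starProjection_eq_self_iff.mpr (hranA _)
  have hlow : ∀ (u : ↥H₀ᗮ) (hu : (u : H) ∈ A.domain),
      c * ‖u‖ ≤ ‖S u + Submodule.orthogonalProjectionOnto H₀ᗮ (A ⟨(u : H), hu⟩)‖ := by
    intro u hu
    have h1 : c * ‖u‖ ^ 2 ≤ (inner ℂ (S u) u : ℂ).re := hs11 u
    have h2 : (inner ℂ ((Submodule.orthogonalProjectionOnto H₀ᗮ (A ⟨(u : H), hu⟩) : ↥H₀ᗮ)) u : ℂ).re = 0 := by
      rw [Submodule.coe_inner, hcoe u hu]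
      exact hre0 _
    have h3 : (inner ℂ (S u + Submodule.orthogonalProjectionOnto H₀ᗮ (A ⟨(u : H), hu⟩)) u : ℂ).re
        = (inner ℂ (S u) u : ℂ).re := by
      rw [inner_add_left, Complex.add_re, h2, add_zero]
    have h4 : (inner ℂ (S u + Submodule.orthogonalProjectionOnto H₀ᗮ (A ⟨(u : H), hu⟩)) u : ℂ).re
        ≤ ‖S u + Submodule.orthogonalProjectionOnto H₀ᗮ (A ⟨(u : H), hu⟩)‖ * ‖u‖ := by
      simpa only [RCLike.re_to_complex] using
        re_inner_le_norm (𝕜 := ℂ) (S u + Submodule.orthogonalProjectionOnto H₀ᗮ (A ⟨(u : H), hu⟩)) u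
    rcases eq_or_ne u 0 with rfl | hu0
    · simp
    · have hnu : 0 < ‖u‖ := norm_pos_iff.mpr hu0
      have : c * ‖u‖ * ‖u‖ ≤ ‖S u + Submodule.orthogonalProjectionOnto H₀ᗮ (A ⟨(u : H), hu⟩)‖ * ‖u‖ := by
        calc c * ‖u‖ * ‖u‖ = c * ‖u‖ ^ 2 := by ring
        _ ≤ _ := le_trans (le_trans h1 (le_of_eq h3.symm)) h4
      exact le_of_mul_le_mul_right this hnu
  -- the operator T_A = S + Ã as a linear map on Dom
  let Dom : Submodule ℂ ↥H₀ᗮ := A.domain.comap H₀ᗮ.subtype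
  have hDomMem : ∀ p : ↥Dom, ((p : ↥H₀ᗮ) : H) ∈ A.domain := fun p => p.2
  let Tfun : ↥Dom → ↥H₀ᗮ := fun p =>
    S (p : ↥H₀ᗮ) + Submodule.orthogonalProjectionOnto H₀ᗮ (A ⟨((p : ↥H₀ᗮ) : H), p.2⟩)
  have hTadd : ∀ p q : ↥Dom, Tfun (p + q) = Tfun p + Tfun q := by
    intro p q
    have h1 : (⟨(((p + q : ↥Dom) : ↥H₀ᗮ) : H), (p + q).2⟩ : A.domain)
        = ⟨((p : ↥H₀ᗮ) : H), p.2⟩ + ⟨((q : ↥H₀ᗮ) : H), q.2⟩ := Subtype.ext rfl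
    show S _ + _ = _
    rw [h1, LinearPMap.map_add]
    simp only [Tfun, Submodule.coe_add, map_add]
    abel
  have hTsmul : ∀ (a : ℂ) (p : ↥Dom), Tfun (a • p) = a • Tfun p := by
    intro a p
    have h1 : (⟨(((a • p : ↥Dom) : ↥H₀ᗮ) : H), (a • p).2⟩ : A.domain)
        = a • ⟨((p : ↥H₀ᗮ) : H), p.2⟩ := Subtype.ext rfl
    show S _ + _ = _
    rw [h1, LinearPMap.map_smul]
    simp only [Tfun, Submodule.coe_smul, map_smul]
    rw [smul_add]
  let Tlin : ↥Dom →ₗ[ℂ] ↥H₀ᗮ :=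
    { toFun := Tfun, map_add' := hTadd, map_smul' := hTsmul }
  have hTlin_apply : ∀ p : ↥Dom,
      Tlin p = S (p : ↥H₀ᗮ) + Submodule.orthogonalProjectionOnto H₀ᗮ (A ⟨((p : ↥H₀ᗮ) : H), p.2⟩) :=
    fun _ => rfl
  have hlow' : ∀ p : ↥Dom, c * ‖(p : ↥H₀ᗮ)‖ ≤ ‖Tlin p‖ := fun p => hlow _ p.2
  have hinj : Function.Injective Tlin := by
    intro p q hpq
    have h1 : Tlin (p - q) = 0 := by rw [map_sub, hpq, sub_self]
    have h2 := hlow' (p - q)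
    rw [h1, norm_zero] at h2
    have h3 : ‖((p - q : ↥Dom) : ↥H₀ᗮ)‖ = 0 := le_antisymm (by nlinarith) (norm_nonneg _)
    have h4 : ((p - q : ↥Dom) : ↥H₀ᗮ) = 0 := norm_eq_zero.mp h3
    have h5 : p - q = 0 := by exact_mod_cast Subtype.ext h4
    exact sub_eq_zero.mp h5
  -- range of Tlin is closed
  have hrcl : IsClosed ((LinearMap.range Tlin : Submodule ℂ ↥H₀ᗮ) : Set ↥H₀ᗮ) := by
    apply IsSeqClosed.isClosed
    intro z y hz hzy
    have hz' : ∀ n, ∃ p : ↥Dom, Tlin p = z n := fun n => hz n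
    choose p hp using hz'
    have hest : ∀ m n, ‖((p m : ↥H₀ᗮ)) - ((p n : ↥H₀ᗮ))‖ ≤ (1 / c) * ‖z m - z n‖ := by
      intro m n
      have h1 := hlow' (p m - p n)
      rw [map_sub, hp, hp] at h1
      have h2 : ((p m - p n : ↥Dom) : ↥H₀ᗮ) = (p m : ↥H₀ᗮ) - (p n : ↥H₀ᗮ) := rfl
      rw [h2] at h1
      have h3 : ‖(p m : ↥H₀ᗮ) - (p n : ↥H₀ᗮ)‖
          = 1 / c * (c * ‖(p m : ↥H₀ᗮ) - (p n : ↥H₀ᗮ)‖) := by field_simp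
      rw [h3]
      exact mul_le_mul_of_nonneg_left h1 (by positivity)
    have hcz : CauchySeq z := hzy.cauchySeq
    have hcu : CauchySeq (fun n => ((p n : ↥H₀ᗮ))) := by
      rw [Metric.cauchySeq_iff] at hcz ⊢
      intro ε hε
      obtain ⟨N, hN⟩ := hcz (c * ε) (by positivity)
      refine ⟨N, fun m hm n hn => ?_⟩
      have h1 := hN m hm n hn
      rw [dist_eq_norm] at h1 ⊢
      calc ‖(p m : ↥H₀ᗮ) - (p n : ↥H₀ᗮ)‖ ≤ 1 / c * ‖z m - z n‖ := hest m n
        _ < 1 / c * (c * ε) := by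
            apply mul_lt_mul_of_pos_left h1 (one_div_pos.mpr hc)
        _ = ε := by field_simp
    obtain ⟨w, hw⟩ := cauchySeq_tendsto_of_complete hcu
    -- the A-values converge
    have hAval : ∀ n, A ⟨((p n : ↥H₀ᗮ) : H), (p n).2⟩
        = ((z n - S (p n : ↥H₀ᗮ) : ↥H₀ᗮ) : H) := by
      intro n
      have h1 := hp n
      rw [hTlin_apply] at h1
      have h2 : Submodule.orthogonalProjectionOnto H₀ᗮ (A ⟨((p n : ↥H₀ᗮ) : H), (p n).2⟩)
          = z n - S (p n : ↥H₀ᗮ) := by rw [← h1]; abel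
      rw [← hcoe _ (p n).2, h2]
    have hconv : Tendsto (fun n => A ⟨((p n : ↥H₀ᗮ) : H), (p n).2⟩) atTop
        (𝓝 ((((y - S w) : ↥H₀ᗮ) : H))) := by
      have h1 : Tendsto (fun n => (z n - S (p n : ↥H₀ᗮ) : ↥H₀ᗮ)) atTop (𝓝 (y - S w)) :=
        hzy.sub ((S.continuous.tendsto _).comp hw)
      have h2 := (continuous_subtype_val.tendsto _).comp h1
      have h3 : (fun n => A ⟨((p n : ↥H₀ᗮ) : H), (p n).2⟩)
          = fun n => (((z n - S (p n : ↥H₀ᗮ)) : ↥H₀ᗮ) : H) := funext hAval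
      rw [h3]
      exact h2
    have hwx : Tendsto (fun n => (((p n : ↥H₀ᗮ)) : H)) atTop (𝓝 ((w : H))) :=
      (continuous_subtype_val.tendsto _).comp hw
    obtain ⟨hwdom, hwval⟩ := hclosed (fun n => ⟨((p n : ↥H₀ᗮ) : H), (p n).2⟩) _ _ hwx hconv
    refine ⟨⟨w, hwdom⟩, ?_⟩
    rw [hTlin_apply]
    show S w + Submodule.orthogonalProjectionOnto H₀ᗮ (A ⟨(w : H), hwdom⟩) = y
    rw [hwval, Submodule.orthogonalProjectionOnto_mem_subspace_eq_self]
    abel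
  -- range of Tlin is all of H₁
  haveI : CompleteSpace ↥(LinearMap.range Tlin) := hrcl.completeSpace_coe
  have hbot : (LinearMap.range Tlin)ᗮ = ⊥ := by
    rw [Submodule.eq_bot_iff]
    intro y hy
    rw [Submodule.mem_orthogonal] at hy
    -- y is orthogonal to the range of T_A
    have hy0 : ∀ p : ↥Dom, (inner ℂ (Tlin p) y : ℂ) = 0 := fun p =>
      hy _ (LinearMap.mem_range_self _ p)
    set x : H := ((y : ↥H₀ᗮ) : H) with hxdef
    set w : H := -(((ContinuousLinearMap.adjoint S y : ↥H₀ᗮ)) : H) with hwdef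
    have hwmem : w ∈ H₀ᗮ := by
      rw [hwdef]
      exact neg_mem (Submodule.coe_mem _)
    have key : ∀ v : A.domain, (inner ℂ w ((v : H)) : ℂ) = inner ℂ x (A v) := by
      intro v
      -- decompose v = v₀ + v₁ with v₀ ∈ H₀ and v₁ ∈ dom A ∩ H₀ᗮ
      set v0 : H := ((Submodule.orthogonalProjectionOnto H₀ ((v : H)) : H₀) : H) with hv0def
      obtain ⟨hv0dom, hv0val⟩ := hH0dom v0 (Submodule.coe_mem _)
      have hv1mem : (v : H) - v0 ∈ H₀ᗮ := Submodule.sub_starProjection_mem_orthogonal (K := H₀) _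
      have hv1dom : (v : H) - v0 ∈ A.domain := sub_mem v.2 hv0dom
      set u1 : ↥H₀ᗮ := ⟨(v : H) - v0, hv1mem⟩ with hu1def
      have hu1dom : (u1 : H) ∈ A.domain := hv1dom
      set q : ↥Dom := ⟨u1, hu1dom⟩ with hqdef
      -- A v = A u1
      have hAv : A v = A ⟨(u1 : H), hu1dom⟩ := by
        have h1 : (v : A.domain) = ⟨v0, hv0dom⟩ + ⟨(u1 : H), hu1dom⟩ := by
          apply Subtype.ext
          show (v : H) = v0 + ((v : H) - v0)
          abel
        rw [h1, LinearPMap.map_add, hv0val, zero_add]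
      -- A u1 ∈ H₀ᗮ and its projection is Tlin q - S u1
      have hproj : Submodule.orthogonalProjectionOnto H₀ᗮ (A ⟨(u1 : H), hu1dom⟩) = Tlin q - S u1 := by
        rw [hTlin_apply]
        abel
      have h2 : (inner ℂ x (A v) : ℂ)
          = inner ℂ (y : ↥H₀ᗮ) ((Tlin q - S u1 : ↥H₀ᗮ)) := by
        rw [hAv, ← hcoe _ hu1dom, hproj, Submodule.coe_inner]
      have h3 : (inner ℂ (y : ↥H₀ᗮ) (Tlin q) : ℂ) = 0 := by
        rw [← inner_conj_symm, hy0 q, map_zero]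
      have h4 : (inner ℂ (y : ↥H₀ᗮ) (S u1) : ℂ)
          = inner ℂ ((ContinuousLinearMap.adjoint S) y) u1 :=
        (ContinuousLinearMap.adjoint_inner_left S u1 y).symm
      have h5 : (inner ℂ w v0 : ℂ) = 0 := by
        rw [← inner_conj_symm]
        rw [(Submodule.mem_orthogonal H₀ w).mp hwmem v0 (Submodule.coe_mem _)]
        exact map_zero _
      have h6 : (inner ℂ w ((v : H)) : ℂ) = inner ℂ w ((u1 : H)) + inner ℂ w v0 := by
        rw [← inner_add_right]
        congr 1
        show (v : H) = ((v : H) - v0) + v0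
        abel
      calc (inner ℂ w ((v : H)) : ℂ)
          = inner ℂ w ((u1 : H)) + inner ℂ w v0 := h6
        _ = inner ℂ w ((u1 : H)) := by rw [h5, add_zero]
        _ = -(inner ℂ (((ContinuousLinearMap.adjoint S y : ↥H₀ᗮ)) : H) ((u1 : H)) : ℂ) := by
              rw [hwdef, inner_neg_left]
        _ = -(inner ℂ ((ContinuousLinearMap.adjoint S) y) u1 : ℂ) := by
              rw [← Submodule.coe_inner]
        _ = -(inner ℂ ((y : ↥H₀ᗮ)) (S u1) : ℂ) := by rw [h4]
        _ = inner ℂ ((y : ↥H₀ᗮ)) ((Tlin q - S u1 : ↥H₀ᗮ)) := by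
              rw [inner_sub_right, h3, zero_sub]
        _ = inner ℂ x (A v) := h2.symm
    have hxdom : x ∈ A.adjoint.domain :=
      LinearPMap.mem_adjoint_domain_of_exists _ ⟨w, fun v => key v⟩
    have hval : A.adjoint ⟨x, hxdom⟩ = w :=
      LinearPMap.adjoint_apply_eq hdense _ (fun v => key v)
    have hle := le_of_eq hskew
    have hxdom' : x ∈ A.domain := hle.1 hxdom
    have h7 : A.adjoint (⟨x, hxdom⟩ : A.adjoint.domain) = (-A) ⟨x, hxdom'⟩ := hle.2 rfl
    rw [hval, LinearPMap.neg_apply] at h7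
    have h8 : A ⟨x, hxdom'⟩ = (((ContinuousLinearMap.adjoint S y : ↥H₀ᗮ)) : H) := by
      rw [← neg_inj, ← h7, hwdef]
    -- now use skewness at x and positivity of S
    have h9 := hre0 ⟨x, hxdom'⟩
    rw [h8] at h9
    have h10 : (inner ℂ ((ContinuousLinearMap.adjoint S y : ↥H₀ᗮ)) (y : ↥H₀ᗮ) : ℂ).re = 0 := by
      rw [Submodule.coe_inner]
      exact h9
    rw [ContinuousLinearMap.adjoint_inner_left, ← inner_conj_symm] at h10
    have h11 : (inner ℂ (S y) (y : ↥H₀ᗮ) : ℂ).re = 0 := by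
      rw [← Complex.conj_re, h10]
    have h12 := hs11 y
    rw [h11] at h12
    have h13 : ‖(y : ↥H₀ᗮ)‖ ^ 2 = 0 :=
      le_antisymm (le_of_mul_le_mul_left (by simpa using h12) hc) (sq_nonneg _)
    exact norm_eq_zero.mp (pow_eq_zero_iff two_ne_zero |>.mp h13)
  have htop : LinearMap.range Tlin = ⊤ := Submodule.orthogonal_eq_bot_iff.mp hbot
  -- construct B as the inverse of Tlin
  have hbij : Function.Bijective Tlin := ⟨hinj, LinearMap.range_eq_top.mp htop⟩
  let EE : ↥Dom ≃ₗ[ℂ] ↥H₀ᗮ := LinearEquiv.ofBijective Tlin hbij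
  have hEE : ∀ p : ↥Dom, EE p = Tlin p := fun p => rfl
  let Blin : ↥H₀ᗮ →ₗ[ℂ] ↥H₀ᗮ := (Dom.subtype).comp EE.symm.toLinearMap
  have hBlin : ∀ y : ↥H₀ᗮ, Blin y = ((EE.symm y : ↥Dom) : ↥H₀ᗮ) := fun y => rfl
  have hTlinsymm : ∀ y : ↥H₀ᗮ, Tlin (EE.symm y) = y := fun y => by
    rw [← hEE, EE.apply_symm_apply]
  have hbound : ∀ y : ↥H₀ᗮ, ‖Blin y‖ ≤ (1 / c) * ‖y‖ := by
    intro y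
    have h1 := hlow' (EE.symm y)
    rw [hTlinsymm] at h1
    rw [hBlin]
    have h3 : ‖((EE.symm y : ↥Dom) : ↥H₀ᗮ)‖
        = 1 / c * (c * ‖((EE.symm y : ↥Dom) : ↥H₀ᗮ)‖) := by field_simp
    rw [h3]
    exact mul_le_mul_of_nonneg_left h1 (by positivity)
  let B : ↥H₀ᗮ →L[ℂ] ↥H₀ᗮ := Blin.mkContinuous (1 / c) hbound
  have hB : ∀ y : ↥H₀ᗮ, B y = ((EE.symm y : ↥Dom) : ↥H₀ᗮ) := fun y => rfl
  have hBnorm : ‖B‖ ≤ 1 / c :=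
    Blin.mkContinuous_norm_le (by positivity) hbound
  -- left inverse property
  have hleft : ∀ (u : ↥H₀ᗮ) (hu : (u : H) ∈ A.domain),
      B (S u + Submodule.orthogonalProjectionOnto H₀ᗮ (A ⟨(u : H), hu⟩)) = u := by
    intro u hu
    have hq : S u + Submodule.orthogonalProjectionOnto H₀ᗮ (A ⟨(u : H), hu⟩)
        = Tlin ⟨u, hu⟩ := rfl
    rw [hq, hB, ← hEE, EE.symm_apply_apply]
  -- membership
  have hmem : ∀ y : ↥H₀ᗮ, ((B y : ↥H₀ᗮ) : H) ∈ A.domain := fun y => (EE.symm y).2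
  -- right inverse property
  have hright : ∀ y : ↥H₀ᗮ,
      S (B y) + Submodule.orthogonalProjectionOnto H₀ᗮ (A ⟨((B y : ↥H₀ᗮ) : H), hmem y⟩) = y := by
    intro y
    have h1 : S (B y) + Submodule.orthogonalProjectionOnto H₀ᗮ (A ⟨((B y : ↥H₀ᗮ) : H), hmem y⟩)
        = Tlin (EE.symm y) := rfl
    rw [h1, hTlinsymm]
  -- norm estimate for Ã B
  have hABnorm : ∀ y : ↥H₀ᗮ,
      ‖A ⟨((B y : ↥H₀ᗮ) : H), hmem y⟩‖ ≤ (1 + ‖S‖ / c) * ‖y‖ := by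
    intro y
    have h1 : Submodule.orthogonalProjectionOnto H₀ᗮ (A ⟨((B y : ↥H₀ᗮ) : H), hmem y⟩)
        = y - S (B y) := eq_sub_of_add_eq' (hright y)
    have h2 : A ⟨((B y : ↥H₀ᗮ) : H), hmem y⟩ = (((y - S (B y) : ↥H₀ᗮ)) : H) := by
      rw [← hcoe _ (hmem y), h1]
    rw [h2]
    have h3 : ‖(((y - S (B y) : ↥H₀ᗮ)) : H)‖ = ‖y - S (B y)‖ := rfl
    rw [h3]
    calc ‖y - S (B y)‖ ≤ ‖y‖ + ‖S (B y)‖ := norm_sub_le _ _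
      _ ≤ ‖y‖ + ‖S‖ * (1 / c * ‖y‖) := by
          gcongr
          calc ‖S (B y)‖ ≤ ‖S‖ * ‖B y‖ := S.le_opNorm _
            _ ≤ ‖S‖ * (1 / c * ‖y‖) :=
                mul_le_mul_of_nonneg_left (hbound y) (norm_nonneg S)
      _ = (1 + ‖S‖ / c) * ‖y‖ := by ring
  -- projection identities
  have hP0i0 : ∀ a : H₀, Submodule.orthogonalProjectionOnto H₀ ((a : H)) = a :=
    fun a => Submodule.orthogonalProjectionOnto_mem_subspace_eq_self a
  have hP1i1 : ∀ a : ↥H₀ᗮ, Submodule.orthogonalProjectionOnto H₀ᗮ ((a : H)) = a :=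
    fun a => Submodule.orthogonalProjectionOnto_mem_subspace_eq_self a
  have hP0i1 : ∀ a : ↥H₀ᗮ, Submodule.orthogonalProjectionOnto H₀ ((a : H)) = 0 :=
    fun a => Submodule.orthogonalProjectionOnto_apply_of_mem_orthogonal a.2
  have hP1i0 : ∀ a : H₀, Submodule.orthogonalProjectionOnto H₀ᗮ ((a : H)) = 0 :=
    fun a => Submodule.orthogonalProjectionOnto_apply_of_mem_orthogonal
      (H₀.le_orthogonal_orthogonal a.2)
  have hdec : ∀ g : H, ((Submodule.orthogonalProjectionOnto H₀ g : H₀) : H)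
      + ((Submodule.orthogonalProjectionOnto H₀ᗮ g : ↥H₀ᗮ) : H) = g :=
    fun g => Submodule.starProjection_add_starProjection_orthogonal (K := H₀) g
  have hdecEq : ∀ g g' : H, Submodule.orthogonalProjectionOnto H₀ g = Submodule.orthogonalProjectionOnto H₀ g' →
      Submodule.orthogonalProjectionOnto H₀ᗮ g = Submodule.orthogonalProjectionOnto H₀ᗮ g' → g = g' := by
    intro g g' h0 h1
    rw [← hdec g, ← hdec g', h0, h1]
  -- inverse identities for the (0,0) block
  have hCl : ∀ a : H₀, schur00 H₀ T (blk00 H₀ T a) = a := by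
    intro a
    have h := Ring.inverse_mul_cancel (blk00 H₀ T) hT00
    have h2 := DFunLike.congr_fun h a
    simpa [schur00, ContinuousLinearMap.mul_apply] using h2
  have hCr : ∀ a : H₀, blk00 H₀ T (schur00 H₀ T a) = a := by
    intro a
    have h := Ring.mul_inverse_cancel (blk00 H₀ T) hT00
    have h2 := DFunLike.congr_fun h a
    simpa [schur00, ContinuousLinearMap.mul_apply] using h2
  have hs01 : ∀ a : ↥H₀ᗮ, schur01 H₀ T a = schur00 H₀ T (blk01 H₀ T a) := fun _ => rfl
  have hs10 : ∀ a : H₀, schur10 H₀ T a = blk10 H₀ T (schur00 H₀ T a) := fun _ => rfl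
  have hSapp : ∀ a : ↥H₀ᗮ,
      S a = blk11 H₀ T a - blk10 H₀ T (schur00 H₀ T (blk01 H₀ T a)) := fun _ => rfl
  -- block action of T
  have hTP0 : ∀ (a0 : H₀) (a1 : ↥H₀ᗮ), Submodule.orthogonalProjectionOnto H₀ (T ((a0 : H) + (a1 : H)))
      = blk00 H₀ T a0 + blk01 H₀ T a1 := by
    intro a0 a1
    simp only [map_add]
    rfl
  have hTP1 : ∀ (a0 : H₀) (a1 : ↥H₀ᗮ), Submodule.orthogonalProjectionOnto H₀ᗮ (T ((a0 : H) + (a1 : H)))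
      = blk10 H₀ T a0 + blk11 H₀ T a1 := by
    intro a0 a1
    simp only [map_add]
    rfl
  -- the big inverse applied to a vector
  have hRapp : ∀ g : H,
      (H₀.subtypeL ∘L
          (schur00 H₀ T + schur01 H₀ T ∘L B ∘L schur10 H₀ T) ∘L
          (Submodule.orthogonalProjectionOnto H₀) +
        H₀.subtypeL ∘L (-(schur01 H₀ T ∘L B)) ∘L (Submodule.orthogonalProjectionOnto H₀ᗮ) +
        H₀ᗮ.subtypeL ∘L (-(B ∘L schur10 H₀ T)) ∘L (Submodule.orthogonalProjectionOnto H₀) +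
        H₀ᗮ.subtypeL ∘L B ∘L (Submodule.orthogonalProjectionOnto H₀ᗮ)) g
      = ((schur00 H₀ T (Submodule.orthogonalProjectionOnto H₀ g)
          - schur01 H₀ T (B (Submodule.orthogonalProjectionOnto H₀ᗮ g
            - schur10 H₀ T (Submodule.orthogonalProjectionOnto H₀ g))) : H₀) : H)
        + ((B (Submodule.orthogonalProjectionOnto H₀ᗮ g
            - schur10 H₀ T (Submodule.orthogonalProjectionOnto H₀ g)) : ↥H₀ᗮ) : H) := by
    intro g
    simp only [ContinuousLinearMap.add_apply, ContinuousLinearMap.comp_apply,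
      ContinuousLinearMap.neg_apply, Submodule.subtypeL_apply, map_sub,
      Submodule.coe_add, Submodule.coe_neg, Submodule.coe_sub]
    abel
  refine ⟨B, hBnorm, hleft, ⟨hmem, hright, hABnorm⟩, ?_, ?_⟩
  · -- left inverse of T + A
    intro u
    have hu2 : (u : H) ∈ A.domain := u.2.2
    have happ : (addA T A) u = T ((u : H)) + A ⟨(u : H), hu2⟩ := rfl
    set x0 : H₀ := Submodule.orthogonalProjectionOnto H₀ ((u : H)) with hx0def
    set x1 : ↥H₀ᗮ := Submodule.orthogonalProjectionOnto H₀ᗮ ((u : H)) with hx1def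
    have hxdec : ((x0 : H)) + ((x1 : H)) = (u : H) := hdec _
    obtain ⟨h0dom, h0val⟩ := hH0dom ((x0 : H)) x0.2
    have hx1dom : ((x1 : H)) ∈ A.domain := by
      have h1 : ((x1 : H)) = (u : H) - ((x0 : H)) := by rw [← hxdec]; abel
      rw [h1]; exact sub_mem hu2 h0dom
    have hAx : A ⟨(u : H), hu2⟩ = A ⟨((x1 : H)), hx1dom⟩ := by
      have h1 : (⟨(u : H), hu2⟩ : A.domain) = ⟨((x0 : H)), h0dom⟩ + ⟨((x1 : H)), hx1dom⟩ :=
        Subtype.ext (by rw [← hxdec]; rfl)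
      rw [h1, LinearPMap.map_add, h0val, zero_add]
    set a1 : ↥H₀ᗮ := Submodule.orthogonalProjectionOnto H₀ᗮ (A ⟨((x1 : H)), hx1dom⟩) with ha1def
    have ha1coe : ((a1 : H)) = A ⟨((x1 : H)), hx1dom⟩ := hcoe _ _
    have hy0 : Submodule.orthogonalProjectionOnto H₀ ((addA T A) u) = blk00 H₀ T x0 + blk01 H₀ T x1 := by
      rw [happ, hAx, ← ha1coe, map_add, hP0i1 a1, add_zero, ← hxdec, hTP0]
    have hy1 : Submodule.orthogonalProjectionOnto H₀ᗮ ((addA T A) u)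
        = blk10 H₀ T x0 + blk11 H₀ T x1 + a1 := by
      rw [happ, hAx, ← ha1coe, map_add, hP1i1 a1, ← hxdec, hTP1]
    have hz : Submodule.orthogonalProjectionOnto H₀ᗮ ((addA T A) u)
        - schur10 H₀ T (Submodule.orthogonalProjectionOnto H₀ ((addA T A) u)) = S x1 + a1 := by
      rw [hy0, hy1]
      have e1 : schur10 H₀ T (blk00 H₀ T x0 + blk01 H₀ T x1)
          = blk10 H₀ T x0 + blk10 H₀ T (schur00 H₀ T (blk01 H₀ T x1)) := by
        rw [hs10, map_add, hCl, map_add]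
      rw [e1, hSapp]
      abel
    have hBz : B (S x1 + a1) = x1 := hleft x1 hx1dom
    rw [hRapp, hz, hBz, hy0]
    have e2 : schur00 H₀ T (blk00 H₀ T x0 + blk01 H₀ T x1) - schur01 H₀ T x1 = x0 := by
      rw [map_add, hCl, hs01]
      abel
    rw [e2]
    exact hxdec
  · -- right inverse of T + A
    intro g
    set y0 : H₀ := Submodule.orthogonalProjectionOnto H₀ g with hy0def
    set y1 : ↥H₀ᗮ := Submodule.orthogonalProjectionOnto H₀ᗮ g with hy1def
    set z : ↥H₀ᗮ := y1 - schur10 H₀ T y0 with hzdef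
    set q : ↥H₀ᗮ := B z with hqdef
    set p : H₀ := schur00 H₀ T y0 - schur01 H₀ T q with hpdefn
    have hRg :
        (H₀.subtypeL ∘L
            (schur00 H₀ T + schur01 H₀ T ∘L B ∘L schur10 H₀ T) ∘L
            (Submodule.orthogonalProjectionOnto H₀) +
          H₀.subtypeL ∘L (-(schur01 H₀ T ∘L B)) ∘L (Submodule.orthogonalProjectionOnto H₀ᗮ) +
          H₀ᗮ.subtypeL ∘L (-(B ∘L schur10 H₀ T)) ∘L (Submodule.orthogonalProjectionOnto H₀) +
          H₀ᗮ.subtypeL ∘L B ∘L (Submodule.orthogonalProjectionOnto H₀ᗮ)) g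
        = ((p : H)) + ((q : H)) := hRapp g
    obtain ⟨hpdom, hpval⟩ := hH0dom ((p : H)) p.2
    have hqdom : ((q : H)) ∈ A.domain := hmem z
    have hsum_dom : ((p : H)) + ((q : H)) ∈ A.domain := add_mem hpdom hqdom
    have hmem2 :
        (H₀.subtypeL ∘L
            (schur00 H₀ T + schur01 H₀ T ∘L B ∘L schur10 H₀ T) ∘L
            (Submodule.orthogonalProjectionOnto H₀) +
          H₀.subtypeL ∘L (-(schur01 H₀ T ∘L B)) ∘L (Submodule.orthogonalProjectionOnto H₀ᗮ) +
          H₀ᗮ.subtypeL ∘L (-(B ∘L schur10 H₀ T)) ∘L (Submodule.orthogonalProjectionOnto H₀) +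
          H₀ᗮ.subtypeL ∘L B ∘L (Submodule.orthogonalProjectionOnto H₀ᗮ)) g ∈ (addA T A).domain := by
      rw [hRg]
      exact Submodule.mem_inf.mpr ⟨hsum_dom, hsum_dom⟩
    refine ⟨hmem2, ?_⟩
    have e0 : (addA T A) ⟨_, hmem2⟩
        = T (((p : H)) + ((q : H))) + A ⟨((p : H)) + ((q : H)), hsum_dom⟩ := by
      have h1 : (⟨_, hmem2⟩ : (addA T A).domain)
          = ⟨((p : H)) + ((q : H)), Submodule.mem_inf.mpr ⟨hsum_dom, hsum_dom⟩⟩ :=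
        Subtype.ext hRg
      rw [h1]
      rfl
    have hAq : A ⟨((q : H)), hqdom⟩ = (((z - S q : ↥H₀ᗮ)) : H) := by
      rw [← hcoe _ hqdom]
      congr 1
      exact eq_sub_of_add_eq' (hright z)
    have e1 : A ⟨((p : H)) + ((q : H)), hsum_dom⟩ = (((z - S q : ↥H₀ᗮ)) : H) := by
      have h2 : (⟨((p : H)) + ((q : H)), hsum_dom⟩ : A.domain)
          = ⟨((p : H)), hpdom⟩ + ⟨((q : H)), hqdom⟩ := Subtype.ext rfl
      rw [h2, LinearPMap.map_add, hpval, zero_add, hAq]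
    rw [e0, e1]
    apply hdecEq
    · rw [map_add, hTP0 p q, hP0i1, add_zero, hpdefn, map_sub, hCr, hs01, hCr, ← hy0def]
      abel
    · rw [map_add, hTP1 p q, hP1i1, hpdefn, map_sub, ← hs10, hSapp, hzdef, ← hy1def]
      rw [hs10, hs01]
      abel

end Paper
end
end

section
/- Let U ⊆ ℂ be open and r ≥ 0. The set Hol(U, B̄_r(0)) of holomorphic functions f : U → ℂ with |f(z)| ≤ r for all z ∈ U is compact in the topology of locally uniform (compact) convergence on Hol(U,ℂ). -/
noncomputable section
open Filter Topology ContinuousLinearMap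

namespace Paper

open scoped UniformConvergence

/-- Holomorphy of a function defined on (the subtype of) a set `U ⊆ ℂ`:
it extends to a function `ℂ → E` differentiable on `U`. -/
def HolFn (U : Set ℂ) {E : Type*} [NormedAddCommGroup E] [NormedSpace ℂ E]
    (f : ↥U → E) : Prop :=
  ∃ g : ℂ → E, DifferentiableOn ℂ g U ∧ ∀ z : ↥U, f z = g (z : ℂ)

/-- The topology of locally uniform (compact) convergence on functions `↥U → E`. -/
def kc (U : Set ℂ) (E : Type*) [UniformSpace E] : TopologicalSpace (↥U → E) :=
  (UniformOnFun.uniformSpace ↥U E {K : Set ↥U | IsCompact K}).toTopologicalSpace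

open Set Metric in
/-- Junk-value extension of a function on `↥U` to all of `ℂ`. -/
def extFn (U : Set ℂ) (f : ↥U → ℂ) : ℂ → ℂ :=
  fun z => @dite _ (z ∈ U) (Classical.dec _) (fun h => f ⟨z, h⟩) (fun _ => 0)

lemma extFn_apply (U : Set ℂ) (f : ↥U → ℂ) {z : ℂ} (hz : z ∈ U) :
    extFn U f z = f ⟨z, hz⟩ := dif_pos hz

open Set Metric in
lemma holFn_iff (U : Set ℂ) (f : ↥U → ℂ) :
    HolFn U f ↔ DifferentiableOn ℂ (extFn U f) U := by
  constructor
  · rintro ⟨g, hg, hfg⟩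
    refine hg.congr fun z hz => ?_
    rw [extFn_apply U f hz, hfg ⟨z, hz⟩]
  · intro h
    exact ⟨extFn U f, h, fun z => by rw [extFn_apply U f z.2]⟩

open Set Metric in
/-- **Montel-type corollary.** For `U ⊆ ℂ` open and `r ≥ 0`, the set of
holomorphic functions on `U` bounded in modulus by `r` is compact in the topology of
locally uniform (compact) convergence. -/
theorem statement_17 (U : Set ℂ) (hU : IsOpen U) (r : ℝ) (hr : 0 ≤ r) :
    @IsCompact (↥U → ℂ) (kc U ℂ) {f | HolFn U f ∧ ∀ z : ↥U, ‖f z‖ ≤ r} := by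
  classical
  set 𝔖 : Set (Set ↥U) := {K : Set ↥U | IsCompact K} with h𝔖
  set S : Set (↥U → ℂ) := {f | HolFn U f ∧ ∀ z : ↥U, ‖f z‖ ≤ r} with hS
  letI : TopologicalSpace (↥U → ℂ) := kc U ℂ
  rw [isCompact_iff_compactSpace]
  -- equicontinuity of the family
  have key_eqcont : Equicontinuous (fun (f : ↥S) => (f : ↥U → ℂ)) := by
    intro x
    rw [Metric.equicontinuousAt_iff]
    intro ε hε
    obtain ⟨ρ, hρ, hρU⟩ := Metric.isOpen_iff.mp hU x.1 x.2
    set R : ℝ := ρ / 2 with hRdef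
    have hR : 0 < R := by positivity
    have hRU : closedBall (x : ℂ) R ⊆ U := fun w hw =>
      hρU (lt_of_le_of_lt (mem_closedBall.mp hw) (by simp [hRdef]; linarith))
    set C : ℝ := 2 * r / R with hCdef
    have hC : 0 ≤ C := by positivity
    refine ⟨min (R / 2) (ε / (C + 1)), by positivity, fun y hy f => ?_⟩
    obtain ⟨⟨g, hg, hfg⟩, hb⟩ := f.2
    have hgb : ∀ z ∈ U, ‖g z‖ ≤ r := fun z hz => by
      simpa [hfg ⟨z, hz⟩] using hb ⟨z, hz⟩
    -- derivative bound on the small ball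
    have hball : ball (x : ℂ) (R / 2) ⊆ U := fun w hw =>
      hRU (mem_closedBall.mpr (le_trans (mem_ball.mp hw).le (by linarith)))
    have hderiv : ∀ ζ ∈ ball (x : ℂ) (R / 2), ‖deriv g ζ‖ ≤ C := by
      intro ζ hζ
      have hsub : closedBall ζ (R / 2) ⊆ U := by
        refine subset_trans ?_ hRU
        intro w hw
        have h1 : dist w ζ ≤ R / 2 := mem_closedBall.mp hw
        have h2 : dist ζ (x : ℂ) < R / 2 := mem_ball.mp hζ
        exact mem_closedBall.mpr ((dist_triangle w ζ (x : ℂ)).trans (by linarith))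
      rw [← Complex.cderiv_eq_deriv hU hg (by positivity) hsub]
      have := Complex.norm_cderiv_le (f := g) (z := ζ) (M := r) (by positivity)
        (fun w hw => hgb w (hsub (sphere_subset_closedBall hw)))
      calc ‖Complex.cderiv (R / 2) g ζ‖ ≤ r / (R / 2) := this
        _ = C := by rw [hCdef, div_div_eq_mul_div]; ring
    have hmem_x : (x : ℂ) ∈ ball (x : ℂ) (R / 2) := mem_ball_self (by positivity)
    have hmem_y : (y : ℂ) ∈ ball (x : ℂ) (R / 2) := by
      rw [mem_ball, ← Subtype.dist_eq]
      exact lt_of_lt_of_le hy (min_le_left _ _)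
    have hlip : ‖g (x : ℂ) - g (y : ℂ)‖ ≤ C * ‖(x : ℂ) - (y : ℂ)‖ :=
      (convex_ball _ _).norm_image_sub_le_of_norm_deriv_le
        (fun w hw => hg.differentiableAt (hU.mem_nhds (hball hw)))
        hderiv hmem_y hmem_x
    have hxy : ‖(x : ℂ) - (y : ℂ)‖ = dist y x := by
      rw [Subtype.dist_eq, dist_comm, dist_eq_norm]
    have hδε : C * min (R / 2) (ε / (C + 1)) < ε := by
      have h1 : C * min (R / 2) (ε / (C + 1)) ≤ C * (ε / (C + 1)) := by
        gcongr; exact min_le_right _ _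
      have h2 : C * (ε / (C + 1)) < ε := by
        rw [mul_div_assoc', div_lt_iff₀ (by positivity)]
        nlinarith
      linarith
    calc dist ((f : ↥U → ℂ) x) ((f : ↥U → ℂ) y)
        = ‖g (x : ℂ) - g (y : ℂ)‖ := by
          rw [dist_eq_norm, hfg x, hfg y]
      _ ≤ C * ‖(x : ℂ) - (y : ℂ)‖ := hlip
      _ = C * dist y x := by rw [hxy]
      _ ≤ C * min (R / 2) (ε / (C + 1)) :=
          mul_le_mul_of_nonneg_left hy.le hC
      _ < ε := hδε
  -- closedness of (the image of) S in the uniform-on-compacts structure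
  have key_closed : IsClosed (UniformOnFun.ofFun 𝔖 '' S) := by
    rw [isClosed_iff_clusterPt]
    intro a ha
    set l : Filter (↥U →ᵤ[𝔖] ℂ) := 𝓝 a ⊓ 𝓟 (UniformOnFun.ofFun 𝔖 '' S) with hl
    haveI : l.NeBot := ha
    have htends : ∀ K ∈ 𝔖,
        TendstoUniformlyOn (fun g : (↥U →ᵤ[𝔖] ℂ) => UniformOnFun.toFun 𝔖 g)
          (UniformOnFun.toFun 𝔖 a) l K := by
      have : Tendsto (id : (↥U →ᵤ[𝔖] ℂ) → _) l (𝓝 a) := tendsto_id.mono_left inf_le_left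
      simpa using (UniformOnFun.tendsto_iff_tendstoUniformlyOn).mp this
    have hmemS : ∀ᶠ g in l, UniformOnFun.toFun 𝔖 g ∈ S := by
      have h1 : ∀ᶠ g in l, g ∈ UniformOnFun.ofFun 𝔖 '' S :=
        le_principal_iff.mp inf_le_right
      filter_upwards [h1] with g hg
      obtain ⟨f0, hf0, rfl⟩ := hg
      simpa using hf0
    set f : ↥U → ℂ := UniformOnFun.toFun 𝔖 a with hf
    -- pointwise bound
    have hbound : ∀ z : ↥U, ‖f z‖ ≤ r := by
      intro z
      have hz : ({z} : Set ↥U) ∈ 𝔖 := isCompact_singleton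
      have hptw : Tendsto (fun g : (↥U →ᵤ[𝔖] ℂ) => UniformOnFun.toFun 𝔖 g z) l (𝓝 (f z)) :=
        (htends _ hz).tendsto_at rfl
      refine le_of_tendsto (hptw.norm) ?_
      filter_upwards [hmemS] with g hg using hg.2 z
    -- holomorphy
    have htlu : TendstoLocallyUniformlyOn
        (fun g : (↥U →ᵤ[𝔖] ℂ) => extFn U (UniformOnFun.toFun 𝔖 g)) (extFn U f) l U := by
      rw [tendstoLocallyUniformlyOn_iff_forall_isCompact hU]
      intro K hKU hK
      have hK' : IsCompact ((Subtype.val : ↥U → ℂ) ⁻¹' K) := by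
        rw [Subtype.isCompact_iff, Set.image_preimage_eq_inter_range, Subtype.range_coe,
          Set.inter_eq_self_of_subset_left hKU]
        exact hK
      have h := htends _ hK'
      intro u hu
      filter_upwards [h u hu] with g hg z hz
      have hzU : z ∈ U := hKU hz
      rw [extFn_apply, extFn_apply]
      exact hg ⟨z, hzU⟩ hz
    have hdiff : ∀ᶠ g in l, DifferentiableOn ℂ
        (extFn U (UniformOnFun.toFun 𝔖 g)) U := by
      filter_upwards [hmemS] with g hg
      exact (holFn_iff U _).mp hg.1
    have hfdiff : DifferentiableOn ℂ (extFn U f) U := htlu.differentiableOn hdiff hU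
    exact ⟨f, ⟨(holFn_iff U f).mpr hfdiff, hbound⟩, rfl⟩
  -- assemble via Arzelà–Ascoli
  refine ArzelaAscoli.compactSpace_of_closed_inducing' (𝔖 := 𝔖)
    (F := fun (f : ↥S) => (f : ↥U → ℂ)) (fun K hK => hK) ?_ ?_
    (fun K _ => key_eqcont.equicontinuousOn K) ?_
  · have h1 : IsInducing (UniformOnFun.ofFun 𝔖 : (↥U → ℂ) → (↥U →ᵤ[𝔖] ℂ)) := by
      constructor
      show kc U ℂ = TopologicalSpace.induced id (UniformOnFun.topologicalSpace ↥U ℂ 𝔖)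
      rw [induced_id]
      rfl
    exact h1.comp IsInducing.subtypeVal
  · have : Set.range (UniformOnFun.ofFun 𝔖 ∘ fun (f : ↥S) => (f : ↥U → ℂ))
        = UniformOnFun.ofFun 𝔖 '' S := by
      rw [Set.range_comp, Subtype.range_coe]
    rw [this]
    exact key_closed
  · intro K _ x _
    exact ⟨closedBall 0 r, isCompact_closedBall 0 r, fun f => by
      simpa [mem_closedBall, dist_eq_norm] using f.2.2 x⟩

end Paper
end
end

section
/- Let H be a complex Hilbert space, 0 < α < β, c > 0, and a₁, a₂, a₃ ∈ L(H) with ‖a_i‖ ≤ β for i = 1,2,3. Let (R_r)_{0≤r≤1} be a family in L(H) with K := sup_{0≤r≤1} ‖R_r‖ < ∞ and R_r → Id in the strong operator topology as r → 0 (an approximation of unity). Assume Re(a₁ − a₂ R_r a₃) ≥ c for all r ∈ [0,1]. Then for every r ∈ [0,1] the operator A_r := a₁ − a₂ R_r a₃ is boundedly invertible with ‖A_r⁻¹‖ ≤ 1/c and Re A_r⁻¹ ≥ c (β + β² K)⁻², and A_r⁻¹ converges to A₀⁻¹ in the strong operator topology as r → 0. -/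
noncomputable section
open Filter Topology ContinuousLinearMap

namespace Paper

set_option linter.unusedVariables false
set_option linter.unusedSectionVars false

variable {H : Type*} [NormedAddCommGroup H] [InnerProductSpace ℂ H] [CompleteSpace H]

lemma coercive_lower (T : H →L[ℂ] H) {c : ℝ} (hc : 0 < c) (h : ReGE T c) (φ : H) :
    c * ‖φ‖ ≤ ‖T φ‖ := by
  rcases eq_or_ne φ 0 with rfl | hφ
  · simp
  have h1 := h φ
  have h2 : ((inner ℂ (T φ) φ : ℂ)).re ≤ ‖T φ‖ * ‖φ‖ := by
    calc ((inner ℂ (T φ) φ : ℂ)).re ≤ ‖(inner ℂ (T φ) φ : ℂ)‖ := Complex.re_le_norm _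
    _ ≤ ‖T φ‖ * ‖φ‖ := norm_inner_le_norm _ _
  have hφ' : 0 < ‖φ‖ := norm_pos_iff.mpr hφ
  nlinarith

lemma coercive_isUnit (T : H →L[ℂ] H) {c : ℝ} (hc : 0 < c) (h : ReGE T c) : IsUnit T := by
  have hlow := coercive_lower T hc h
  have hanti : AntilipschitzWith ⟨c⁻¹, by positivity⟩ T :=
    T.antilipschitz_of_bound (fun x => by
      have := hlow x
      change ‖x‖ ≤ c⁻¹ * ‖T x‖
      rw [← le_div_iff₀' hc] at this
      simpa [div_eq_inv_mul] using this)
  have hinj : Function.Injective T := hanti.injective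
  have hclosed : IsClosed (Set.range T) := hanti.isClosed_range T.uniformContinuous
  have hrange_closed : IsClosed ((LinearMap.range (T : H →ₗ[ℂ] H) : Submodule ℂ H) : Set H) := by
    rw [LinearMap.coe_range]; exact hclosed
  haveI : CompleteSpace (LinearMap.range (T : H →ₗ[ℂ] H)) := hrange_closed.completeSpace_coe
  have horth : (LinearMap.range (T : H →ₗ[ℂ] H))ᗮ = ⊥ := by
    rw [Submodule.eq_bot_iff]
    intro ψ hψ
    have h0 : (inner ℂ (T ψ) ψ : ℂ) = 0 :=
      (Submodule.mem_orthogonal _ _).mp hψ (T ψ) (LinearMap.mem_range_self _ ψ)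
    have h1 := h ψ
    rw [h0] at h1
    simp only [Complex.zero_re] at h1
    have hx : ‖ψ‖ ^ 2 = 0 := le_antisymm (by nlinarith) (by positivity)
    have : ‖ψ‖ = 0 := by
      have := pow_eq_zero_iff (n := 2) (by norm_num) |>.mp hx
      exact this
    simpa using this
  have hrange : LinearMap.range (T : H →ₗ[ℂ] H) = ⊤ := Submodule.orthogonal_eq_bot_iff.mp horth
  have hker : LinearMap.ker (T : H →ₗ[ℂ] H) = ⊥ := LinearMap.ker_eq_bot.mpr hinj
  have hcoe : ⇑(ContinuousLinearEquiv.ofBijective T hker hrange) = ⇑T :=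
    ContinuousLinearEquiv.coeFn_ofBijective T hker hrange
  refine isUnit_iff_exists.mpr
    ⟨↑(ContinuousLinearEquiv.ofBijective T hker hrange).symm, ?_, ?_⟩
  · ext x
    simp only [ContinuousLinearMap.mul_apply, ContinuousLinearMap.one_apply,
      ContinuousLinearEquiv.coe_coe]
    rw [← hcoe]
    exact (ContinuousLinearEquiv.ofBijective T hker hrange).apply_symm_apply x
  · ext x
    simp only [ContinuousLinearMap.mul_apply, ContinuousLinearMap.one_apply,
      ContinuousLinearEquiv.coe_coe]
    rw [← hcoe]
    exact (ContinuousLinearEquiv.ofBijective T hker hrange).symm_apply_apply x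

lemma inv_cancel_right (T : H →L[ℂ] H) (h : IsUnit T) (ψ : H) :
    T (Ring.inverse T ψ) = ψ := by
  rw [← ContinuousLinearMap.mul_apply, Ring.mul_inverse_cancel T h,
    ContinuousLinearMap.one_apply]

lemma coercive_inv_bound (T : H →L[ℂ] H) {c : ℝ} (hc : 0 < c) (h : ReGE T c) (ψ : H) :
    ‖Ring.inverse T ψ‖ ≤ (1 / c) * ‖ψ‖ := by
  have hu := coercive_isUnit T hc h
  have hlow := coercive_lower T hc h (Ring.inverse T ψ)
  rw [inv_cancel_right T hu ψ] at hlow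
  have h2 : ‖Ring.inverse T ψ‖ ≤ ‖ψ‖ / c := (le_div_iff₀ hc).mpr (by linarith)
  calc ‖Ring.inverse T ψ‖ ≤ ‖ψ‖ / c := h2
  _ = (1 / c) * ‖ψ‖ := by ring

lemma coercive_inv_ReGE (T : H →L[ℂ] H) {c M : ℝ} (hc : 0 < c) (hM : 0 < M)
    (h : ReGE T c) (hT : ‖T‖ ≤ M) : ReGE (Ring.inverse T) (c * (M⁻¹) ^ 2) := by
  have hu := coercive_isUnit T hc h
  intro ψ
  set φ := Ring.inverse T ψ with hφdef
  have hTφ : T φ = ψ := inv_cancel_right T hu ψ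
  have hre : (inner ℂ φ ψ : ℂ).re = (inner ℂ (T φ) φ : ℂ).re := by
    conv_lhs => rw [← hTφ]
    have hcj : (inner ℂ φ (T φ) : ℂ) = starRingEnd ℂ (inner ℂ (T φ) φ) :=
      (inner_conj_symm _ _).symm
    rw [hcj, Complex.conj_re]
  have h2 : c * ‖φ‖ ^ 2 ≤ (inner ℂ (T φ) φ : ℂ).re := h φ
  have h3 : ‖ψ‖ ≤ M * ‖φ‖ := by
    calc ‖ψ‖ = ‖T φ‖ := by rw [hTφ]
    _ ≤ ‖T‖ * ‖φ‖ := T.le_opNorm φ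
    _ ≤ M * ‖φ‖ := by gcongr
  have h4 : M⁻¹ * ‖ψ‖ ≤ ‖φ‖ := by
    rw [inv_mul_le_iff₀ hM]; linarith
  have h5 : (M⁻¹ * ‖ψ‖) ^ 2 ≤ ‖φ‖ ^ 2 := pow_le_pow_left₀ (by positivity) h4 2
  rw [hre]
  calc c * (M⁻¹) ^ 2 * ‖ψ‖ ^ 2 = c * (M⁻¹ * ‖ψ‖) ^ 2 := by ring
  _ ≤ c * ‖φ‖ ^ 2 := mul_le_mul_of_nonneg_left h5 hc.le
  _ ≤ _ := h2

/-- **cell migration model.** Given `a₁,a₂,a₃` with `‖aᵢ‖ ≤ β`, an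
approximation of unity `(R_r)_{0≤r≤1}` with bound `K` and `Re(a₁ − a₂R_r a₃) ≥ c` for all
`r ∈ [0,1]`, each `A_r := a₁ − a₂R_r a₃` is boundedly invertible with `‖A_r⁻¹‖ ≤ 1/c` and
`Re A_r⁻¹ ≥ c(β+β²K)⁻²`, and `A_r⁻¹ → A₀⁻¹` in the strong operator topology as `r → 0`. -/
theorem statement_19 (α β c K : ℝ) (hα : 0 < α) (hαβ : α < β) (hc : 0 < c)
    (a₁ a₂ a₃ : H →L[ℂ] H) (hb1 : ‖a₁‖ ≤ β) (hb2 : ‖a₂‖ ≤ β) (hb3 : ‖a₃‖ ≤ β)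
    (R : ℝ → H →L[ℂ] H)
    (hK : ∀ r ∈ Set.Icc (0:ℝ) 1, ‖R r‖ ≤ K)
    (hunity : ∀ φ : H, Tendsto (fun r => R r φ) (𝓝[Set.Icc (0:ℝ) 1] 0) (𝓝 φ))
    (hacc : ∀ r ∈ Set.Icc (0:ℝ) 1, ReGE (a₁ - a₂ ∘L R r ∘L a₃) c) :
    (∀ r ∈ Set.Icc (0:ℝ) 1,
      IsUnit (a₁ - a₂ ∘L R r ∘L a₃) ∧
      ‖Ring.inverse (a₁ - a₂ ∘L R r ∘L a₃)‖ ≤ 1 / c ∧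
      ReGE (Ring.inverse (a₁ - a₂ ∘L R r ∘L a₃)) (c * ((β + β ^ 2 * K)⁻¹) ^ 2)) ∧
    ∀ φ : H, Tendsto (fun r => Ring.inverse (a₁ - a₂ ∘L R r ∘L a₃) φ)
      (𝓝[Set.Icc (0:ℝ) 1] 0) (𝓝 (Ring.inverse (a₁ - a₂ ∘L R 0 ∘L a₃) φ)) := by
  have hβ : 0 < β := hα.trans hαβ
  have h0mem : (0:ℝ) ∈ Set.Icc (0:ℝ) 1 := ⟨le_refl 0, zero_le_one⟩
  have hK0 : 0 ≤ K := (norm_nonneg (R 0)).trans (hK 0 h0mem)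
  set M : ℝ := β + β ^ 2 * K with hMdef
  have hM : 0 < M := by positivity
  set A : ℝ → H →L[ℂ] H := fun r => a₁ - a₂ ∘L R r ∘L a₃ with hAdef
  have hAnorm : ∀ r ∈ Set.Icc (0:ℝ) 1, ‖A r‖ ≤ M := by
    intro r hr
    have h3 := hK r hr
    have h4 : ‖a₂ ∘L R r ∘L a₃‖ ≤ β * (K * β) := by
      calc ‖a₂ ∘L R r ∘L a₃‖ ≤ ‖a₂‖ * ‖R r ∘L a₃‖ := opNorm_comp_le _ _
      _ ≤ ‖a₂‖ * (‖R r‖ * ‖a₃‖) := by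
          exact mul_le_mul_of_nonneg_left (opNorm_comp_le _ _) (norm_nonneg a₂)
      _ ≤ β * (K * β) := by gcongr
    have h5 : β * (K * β) = β ^ 2 * K := by ring
    calc ‖A r‖ ≤ ‖a₁‖ + ‖a₂ ∘L R r ∘L a₃‖ := norm_sub_le _ _
    _ ≤ β + β ^ 2 * K := by linarith
  have hunit : ∀ r ∈ Set.Icc (0:ℝ) 1, IsUnit (A r) := fun r hr =>
    coercive_isUnit _ hc (hacc r hr)
  refine ⟨fun r hr => ⟨hunit r hr, ?_, coercive_inv_ReGE _ hc hM (hacc r hr) (hAnorm r hr)⟩, ?_⟩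
  · refine opNorm_le_bound _ (by positivity) ?_
    intro x
    exact coercive_inv_bound _ hc (hacc r hr) x
  -- strong convergence
  intro ψ
  set B₀ : H →L[ℂ] H := Ring.inverse (A 0) with hB₀def
  set χ : H := a₃ (B₀ ψ) with hχdef
  have hR0χ : R 0 χ = χ := by
    have h1 : Tendsto (fun r => R r χ) (pure (0:ℝ)) (𝓝 χ) :=
      (hunity χ).mono_left (pure_le_nhdsWithin h0mem)
    have h2 : Tendsto (fun r => R r χ) (pure (0:ℝ)) (𝓝 (R 0 χ)) := tendsto_pure_nhds _ 0
    exact tendsto_nhds_unique h2 h1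
  have key : ∀ r ∈ Set.Icc (0:ℝ) 1,
      ‖Ring.inverse (A r) ψ - B₀ ψ‖ ≤ (1 / c) * (β * ‖R r χ - χ‖) := by
    intro r hr
    have hu := hunit r hr
    have hApp : ∀ s, A s (B₀ ψ) = a₁ (B₀ ψ) - a₂ (R s χ) := fun s => by
      simp only [hAdef, ContinuousLinearMap.sub_apply, ContinuousLinearMap.comp_apply, hχdef]
    have h1 : A r (Ring.inverse (A r) ψ - B₀ ψ) = ψ - A r (B₀ ψ) := by
      rw [map_sub, inv_cancel_right _ hu]
    have h2 : ψ - A r (B₀ ψ) = a₂ (R r χ - χ) := by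
      have hψ : ψ = a₁ (B₀ ψ) - a₂ χ := by
        rw [← hR0χ, ← hApp 0]
        exact (inv_cancel_right _ (hunit 0 h0mem) ψ).symm
      rw [hApp r, map_sub]
      nth_rewrite 1 [hψ]
      abel
    have hlow := coercive_lower (A r) hc (hacc r hr) (Ring.inverse (A r) ψ - B₀ ψ)
    rw [h1, h2] at hlow
    have h3 : ‖a₂ (R r χ - χ)‖ ≤ β * ‖R r χ - χ‖ := by
      calc ‖a₂ (R r χ - χ)‖ ≤ ‖a₂‖ * ‖R r χ - χ‖ := a₂.le_opNorm _
      _ ≤ β * ‖R r χ - χ‖ := by gcongr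
    have h5 : c * ‖Ring.inverse (A r) ψ - B₀ ψ‖ ≤ β * ‖R r χ - χ‖ := hlow.trans h3
    calc ‖Ring.inverse (A r) ψ - B₀ ψ‖
        = (1 / c) * (c * ‖Ring.inverse (A r) ψ - B₀ ψ‖) := by field_simp
    _ ≤ (1 / c) * (β * ‖R r χ - χ‖) := by gcongr
  have hnorm0 : Tendsto (fun r => (1 / c) * (β * ‖R r χ - χ‖))
      (𝓝[Set.Icc (0:ℝ) 1] 0) (𝓝 0) := by
    have h1 : Tendsto (fun r => R r χ - χ) (𝓝[Set.Icc (0:ℝ) 1] 0) (𝓝 0) := by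
      have := (hunity χ).sub
        (tendsto_const_nhds : Tendsto (fun _ : ℝ => χ) (𝓝[Set.Icc (0:ℝ) 1] 0) (𝓝 χ))
      rwa [sub_self] at this
    have h2 : Tendsto (fun r => ‖R r χ - χ‖) (𝓝[Set.Icc (0:ℝ) 1] 0) (𝓝 0) :=
      tendsto_norm_zero.comp h1
    have h3 := (h2.const_mul β).const_mul (1 / c)
    simpa using h3
  have hsq : Tendsto (fun r => Ring.inverse (A r) ψ - B₀ ψ)
      (𝓝[Set.Icc (0:ℝ) 1] 0) (𝓝 0) := by
    refine squeeze_zero_norm' ?_ hnorm0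
    exact eventually_mem_nhdsWithin.mono (fun r hr => key r hr)
  have := tendsto_sub_nhds_zero_iff.mp hsq
  exact this

end Paper
end
end
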